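/- arXiv:2412.08284 — 2 statements merged into one kernel-verified Lean document; each statement's English description precedes it below -/
import Mathlib

section
/- Under the assumptions of the previous statement, if additionally there exists some j ∈ L with p_j > 0 and Δ_j > Δ_{j*}, then the inequality is strict: ∑_{j∈L} Δ_j · p'_j < ∑_{j∈L} Δ_j · p_j. -/
/-- Strict descent: if some index with positive mass has Δ_j > Δ_{j*}, the weighted
sum strictly decreases under the DTO-O update. -/
theorem stmt_2 {ι : Type*} [DecidableEq ι] (L : Finset ι) (hL : L.Nonempty)
    (Δ : ι → ℝ) (p : ι → ℝ) (hp : ∀ j ∈ L, 0 ≤ p j) (hsum : ∑ j ∈ L, p j = 1)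
    (τ : ℝ) (hτ0 : 0 < τ) (hτ1 : τ ≤ 1)
    (jstar : ι) (hjstar : jstar ∈ L) (hmin : ∀ j ∈ L, Δ jstar ≤ Δ j)
    (p' : ι → ℝ)
    (hp'ne : ∀ j ∈ L, j ≠ jstar → p' j = (1 - τ) * p j)
    (hp'star : p' jstar = p jstar + τ * ∑ j ∈ L.erase jstar, p j)
    (hstrict : ∃ j ∈ L, 0 < p j ∧ Δ jstar < Δ j) :
    ∑ j ∈ L, Δ j * p' j < ∑ j ∈ L, Δ j * p j := by
  obtain ⟨k, hkL, hpk, hΔk⟩ := hstrict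
  have hk : k ≠ jstar := fun h => absurd hΔk (by simp [h])
  have hkE : k ∈ L.erase jstar := Finset.mem_erase.2 ⟨hk, hkL⟩
  set A := ∑ j ∈ L.erase jstar, Δ j * p j with hA
  set B := ∑ j ∈ L.erase jstar, p j with hB
  have key : Δ jstar * B < A := by
    rw [hB, Finset.mul_sum, hA]
    refine Finset.sum_lt_sum (fun j hj => ?_) ⟨k, hkE, ?_⟩
    · exact mul_le_mul_of_nonneg_right (hmin j (Finset.mem_of_mem_erase hj))
        (hp j (Finset.mem_of_mem_erase hj))
    · exact mul_lt_mul_of_pos_right hΔk hpk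
  have h1 : ∑ j ∈ L, Δ j * p' j
      = (1 - τ) * A + Δ jstar * (p jstar + τ * B) := by
    rw [← Finset.sum_erase_add L _ hjstar, hp'star]
    congr 1
    rw [hA, Finset.mul_sum]
    refine Finset.sum_congr rfl fun j hj => ?_
    rw [hp'ne j (Finset.mem_of_mem_erase hj) (Finset.ne_of_mem_erase hj)]
    ring
  have h2 : ∑ j ∈ L, Δ j * p j = A + Δ jstar * p jstar :=
    (Finset.sum_erase_add L _ hjstar).symm
  rw [h1, h2]
  nlinarith [mul_lt_mul_of_pos_left key hτ0]
end

section
/- Suppose n servers have capacities μ_1, …, μ_n > 0 and total load Λ ≥ 0 with Λ < ∑ μ_j must be distributed as loads λ_j ≥ 0 with ∑ λ_j = Λ. If an allocation minimizes ∑_j λ_j/(μ_j − λ_j), then at the optimum all servers with positive load have equal marginal delay μ_j/(μ_j − λ_j)², i.e., for any j, k with λ_j > 0 and λ_k > 0, μ_j/(μ_j − λ_j)² = μ_k/(μ_k − λ_k)² provided the optimum is interior (all λ_j ∈ (0, μ_j)). -/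
/-- At an interior optimum of the load-balancing problem, all servers with
positive load have equal marginal delay μ_j/(μ_j − λ_j)². -/
theorem stmt_12 {n : ℕ} (μ lam : Fin n → ℝ) (Λ : ℝ)
    (hμ : ∀ j, 0 < μ j) (hΛ0 : 0 ≤ Λ) (hΛ : Λ < ∑ j, μ j)
    (hsum : ∑ j, lam j = Λ)
    (hint : ∀ j, lam j ∈ Set.Ioo 0 (μ j))
    (hopt : ∀ lam' : Fin n → ℝ, (∀ j, 0 ≤ lam' j ∧ lam' j < μ j) →
      ∑ j, lam' j = Λ →
      ∑ j, lam j / (μ j - lam j) ≤ ∑ j, lam' j / (μ j - lam' j)) :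
    ∀ j k, 0 < lam j → 0 < lam k →
      μ j / (μ j - lam j)^2 = μ k / (μ k - lam k)^2 := by
  intro j k hj hk
  by_cases hjk : j = k
  · rw [hjk]
  obtain ⟨haj, hAj⟩ := hint j
  obtain ⟨hbk, hAk⟩ := hint k
  set a := lam j with ha
  set b := lam k with hb
  set A := μ j with hA
  set B := μ k with hB
  have hAa : 0 < A - a := sub_pos.mpr hAj
  have hBb : 0 < B - b := sub_pos.mpr hAk
  set f : ℝ → ℝ := fun t => (a + t)/(A - (a + t)) + (b - t)/(B - (b - t)) with hf
  set ε : ℝ := min a (min (A - a) (min b (B - b))) with hε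
  have hεpos : 0 < ε := by
    simp only [hε, lt_min_iff]
    exact ⟨hj, hAa, hbk, hBb⟩
  have hmin : IsLocalMin f 0 := by
    rw [IsLocalMin, IsMinFilter, Metric.eventually_nhds_iff]
    refine ⟨ε, hεpos, ?_⟩
    intro t ht
    rw [Real.dist_eq, sub_zero] at ht
    have ht1 : |t| < a := lt_of_lt_of_le ht (min_le_left _ _)
    have ht2 : |t| < A - a := lt_of_lt_of_le ht (le_trans (min_le_right _ _) (min_le_left _ _))
    have ht3 : |t| < b := lt_of_lt_of_le ht (le_trans (min_le_right _ _)
      (le_trans (min_le_right _ _) (min_le_left _ _)))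
    have ht4 : |t| < B - b := lt_of_lt_of_le ht (le_trans (min_le_right _ _)
      (le_trans (min_le_right _ _) (min_le_right _ _)))
    rw [abs_lt] at ht1 ht2 ht3 ht4
    set lam' : Fin n → ℝ := fun i =>
      lam i + (if i = j then t else 0) - (if i = k then t else 0) with hlam'
    have hvj : lam' j = a + t := by simp [hlam', hjk, ha]
    have hvk : lam' k = b - t := by simp [hlam', Ne.symm hjk, hb]
    have hvo : ∀ i, i ≠ j → i ≠ k → lam' i = lam i := by
      intro i hij hik; simp [hlam', hij, hik]
    have hfeas : ∀ i, 0 ≤ lam' i ∧ lam' i < μ i := by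
      intro i
      rcases eq_or_ne i j with rfl | hij
      · rw [hvj, ← hA]
        exact ⟨by linarith [ht1.1], by linarith [ht2.2]⟩
      · rcases eq_or_ne i k with rfl | hik
        · rw [hvk, ← hB]
          exact ⟨by linarith [ht3.2], by linarith [ht4.1]⟩
        · rw [hvo i hij hik]
          exact ⟨(hint i).1.le, (hint i).2⟩
    have hsum' : ∑ i, lam' i = Λ := by
      simp only [hlam']
      rw [Finset.sum_sub_distrib, Finset.sum_add_distrib]
      simp [Finset.sum_ite_eq', hsum]
    have hle := hopt lam' hfeas hsum'
    have hdiff : ∑ i, lam' i/(μ i - lam' i) - ∑ i, lam i/(μ i - lam i) = f t - f 0 := by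
      rw [← Finset.sum_sub_distrib]
      have hcong : ∀ i ∈ Finset.univ, lam' i/(μ i - lam' i) - lam i/(μ i - lam i) =
          (if i = j then (a+t)/(A-(a+t)) - a/(A-a) else 0) +
          (if i = k then (b-t)/(B-(b-t)) - b/(B-b) else 0) := by
        intro i _
        rcases eq_or_ne i j with rfl | hij
        · rw [hvj, if_pos rfl, if_neg hjk, ← hA, ← ha, add_zero]
        · rcases eq_or_ne i k with rfl | hik
          · rw [hvk, if_neg hij, if_pos rfl, ← hB, ← hb, zero_add]
          · rw [hvo i hij hik, if_neg hij, if_neg hik, sub_self, add_zero]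
      rw [Finset.sum_congr rfl hcong, Finset.sum_add_distrib]
      simp only [Finset.sum_ite_eq', Finset.mem_univ, if_pos]
      simp only [hf]
      ring
    have h0 : (0:ℝ) ≤ f t - f 0 := by
      rw [← hdiff]
      exact sub_nonneg.mpr hle
    linarith
  have hc : HasDerivAt (fun t : ℝ => a + t) 1 0 := by
    simpa using (hasDerivAt_id (0:ℝ)).const_add a
  have hd : HasDerivAt (fun t : ℝ => A - (a + t)) (-1) 0 := by
    simpa using hc.const_sub A
  have hne1 : A - (a + (0:ℝ)) ≠ 0 := by simp only [add_zero]; positivity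
  have h1 : HasDerivAt (fun t : ℝ => (a + t)/(A - (a + t))) (A/(A-a)^2) 0 := by
    have h : HasDerivAt (fun t : ℝ => (a + t)/(A - (a + t))) _ 0 := hc.div hd hne1
    convert h using 1
    simp only [add_zero]
    field_simp
    try ring
  have hc2 : HasDerivAt (fun t : ℝ => b - t) (-1) 0 := by
    simpa using (hasDerivAt_id (0:ℝ)).const_sub b
  have hd2 : HasDerivAt (fun t : ℝ => B - (b - t)) 1 0 := by
    simpa using hc2.const_sub B
  have hne2 : B - (b - (0:ℝ)) ≠ 0 := by simp only [sub_zero]; positivity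
  have h2 : HasDerivAt (fun t : ℝ => (b - t)/(B - (b - t))) (-(B/(B-b)^2)) 0 := by
    have h : HasDerivAt (fun t : ℝ => (b - t)/(B - (b - t))) _ 0 := hc2.div hd2 hne2
    convert h using 1
    simp only [sub_zero]
    field_simp
    try ring
  have hder : HasDerivAt f (A/(A-a)^2 + -(B/(B-b)^2)) 0 := h1.add h2
  have hz := hmin.hasDerivAt_eq_zero hder
  linarith
end
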